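/- In any infinite word σ over a pushdown alphabet, the set of positions that have no caller with a defined matching return is infinite; equivalently, in the Hintikka-sequence encoding, the proposition p_∞ holds at infinitely many positions of any infinite timed word. -/
import Mathlib


inductive SymKind where
  | call | ret | intl
deriving DecidableEq

/-- Well-matched words over a pushdown alphabet, where `k` assigns to each
letter its kind (call, return, or internal). -/
inductive WellMatched {A : Type*} (k : A → SymKind) : List A → Prop
  | nil : WellMatched k []
  | int {a : A} {s : List A} : k a = SymKind.intl → WellMatched k s →
      WellMatched k (a :: s)
  | matched {c r : A} {s s' : List A} : k c = SymKind.call → k r = SymKind.ret →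
      WellMatched k s → WellMatched k s' →
      WellMatched k (c :: (s ++ r :: s'))

/-- Number of call symbols in a finite word. -/
def callCount {A : Type*} (k : A → SymKind) (s : List A) : ℕ :=
  s.countP (fun a => decide (k a = SymKind.call))

/-- Number of return symbols in a finite word. -/
def retCount {A : Type*} (k : A → SymKind) (s : List A) : ℕ :=
  s.countP (fun a => decide (k a = SymKind.ret))

/-- The finite subword `σ[i, j-1]` of the infinite word `σ` (letters at
positions `i, i+1, ..., j-1`). -/
def wordSlice {A : Type*} (σ : ℕ → A) (i j : ℕ) : List A :=
  (List.range (j - i)).map fun n => σ (i + n)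

/-- `j` is a matching return of position `i`: `j > i`, `j` is a return
position, and the subword `σ[i+1, j-1]` is well-matched. -/
def MatchRet {A : Type*} (k : A → SymKind) (σ : ℕ → A) (i j : ℕ) : Prop :=
  i < j ∧ k (σ j) = SymKind.ret ∧ WellMatched k (wordSlice σ (i + 1) j)

/-- The abstract-successor relation `SUCC(abs, σ, i) = j`. -/
def AbsSucc {A : Type*} (k : A → SymKind) (σ : ℕ → A) (i j : ℕ) : Prop :=
  if k (σ i) = SymKind.call then MatchRet k σ i j
  else j = i + 1 ∧ k (σ (i + 1)) ≠ SymKind.ret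

/-- `j` is a candidate caller of `i`: a call position `j < i` whose abstract
successor is undefined or greater than `i`. -/
def CallerCand {A : Type*} (k : A → SymKind) (σ : ℕ → A) (i j : ℕ) : Prop :=
  j < i ∧ k (σ j) = SymKind.call ∧ ∀ m, AbsSucc k σ j m → i < m

/-- `j` is the caller of `i`: the greatest candidate caller. -/
def Caller {A : Type*} (k : A → SymKind) (σ : ℕ → A) (i j : ℕ) : Prop :=
  CallerCand k σ i j ∧ ∀ j', CallerCand k σ i j' → j' ≤ j

/-- `S` is a maximal abstract path (MAP): the set of positions reachable via
the abstract successor from a position `i0` with no abstract predecessor. -/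
def IsMAP {A : Type*} (k : A → SymKind) (σ : ℕ → A) (S : Set ℕ) : Prop :=
  ∃ i0, (¬ ∃ p, AbsSucc k σ p i0) ∧
    S = {j | Relation.ReflTransGen (AbsSucc k σ) i0 j}

/-- The set of positions of the (unique) maximal abstract path visiting `i`. -/
def PosA {A : Type*} (k : A → SymKind) (σ : ℕ → A) (i : ℕ) : Set ℕ :=
  {j | Relation.ReflTransGen (AbsSucc k σ) i j ∨
       Relation.ReflTransGen (AbsSucc k σ) j i}

/-- The set of positions of the caller path of `σ` from `i`. -/
def PosC {A : Type*} (k : A → SymKind) (σ : ℕ → A) (i : ℕ) : Set ℕ :=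
  {j | Relation.ReflTransGen (fun a b => Caller k σ a b) i j}

/-- The special proposition `p_∞` holds at position `p` iff `p` has no caller
whose matching return is defined. -/
def PInf {A : Type*} (k : A → SymKind) (σ : ℕ → A) (p : ℕ) : Prop :=
  ¬ ∃ c, Caller k σ p c ∧ ∃ r, MatchRet k σ c r

lemma count_eq {A : Type*} (k : A → SymKind) {s : List A} (h : WellMatched k s) :
    callCount k s = retCount k s := by
  induction h with
  | nil => rfl
  | int ha _ ih =>
    simp [callCount, retCount, List.countP_cons, ha] at *
    omega
  | matched hc hr _ _ ih1 ih2 =>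
    simp [callCount, retCount, List.countP_cons, List.countP_append, hc, hr] at *
    omega

lemma prefix_le {A : Type*} (k : A → SymKind) {s : List A} (h : WellMatched k s) :
    ∀ t u : List A, s = t ++ u → retCount k t ≤ callCount k t := by
  induction h with
  | nil =>
    intro t u ht
    obtain ⟨rfl, rfl⟩ := List.append_eq_nil_iff.mp ht.symm
    simp [retCount, callCount]
  | int ha _ ih =>
    intro t u ht
    cases t with
    | nil => simp [retCount, callCount]
    | cons b t' =>
      simp only [List.cons_append, List.cons.injEq] at ht
      obtain ⟨rfl, ht⟩ := ht
      have := ih t' u ht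
      simp [retCount, callCount, List.countP_cons, ha] at *
      omega
  | matched hc hr hs hs' ih1 ih2 =>
    intro t u ht
    cases t with
    | nil => simp [retCount, callCount]
    | cons b t' =>
      simp only [List.cons_append, List.cons.injEq] at ht
      obtain ⟨rfl, ht⟩ := ht
      rcases List.append_eq_append_iff.mp ht with ⟨a', rfl, ha'⟩ | ⟨c', rfl, hc'⟩
      · cases a' with
        | nil =>
          have h1 := count_eq k hs
          simp [retCount, callCount, List.countP_cons, List.countP_append, hc] at *
          omega
        | cons x a'' =>
          simp only [List.cons_append, List.cons.injEq] at ha'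
          obtain ⟨rfl, rfl⟩ := ha'
          have h1 := count_eq k hs
          have h2 := ih2 a'' u rfl
          simp [retCount, callCount, List.countP_cons, List.countP_append, hc, hr] at *
          omega
      · have h2 := ih1 t' c' rfl
        simp [retCount, callCount, List.countP_cons, hc] at *
        omega

lemma wordSlice_length {A : Type*} (σ : ℕ → A) (i j : ℕ) :
    (wordSlice σ i j).length = j - i := by simp [wordSlice]

lemma wordSlice_append {A : Type*} (σ : ℕ → A) {a m b : ℕ} (h1 : a ≤ m) (h2 : m ≤ b) :
    wordSlice σ a b = wordSlice σ a m ++ wordSlice σ m b := by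
  unfold wordSlice
  have h : b - a = (m - a) + (b - m) := by omega
  rw [h, List.range_add, List.map_append, List.map_map]
  congr 1
  apply List.map_congr_left
  intro n _
  simp only [Function.comp_apply]
  congr 1
  omega

lemma wordSlice_cons {A : Type*} (σ : ℕ → A) {m b : ℕ} (h : m < b) :
    wordSlice σ m b = σ m :: wordSlice σ (m + 1) b := by
  unfold wordSlice
  have hh : b - m = (b - (m + 1)) + 1 := by omega
  rw [hh, List.range_succ_eq_map, List.map_cons, List.map_map]
  simp only [Nat.add_zero]
  congr 1
  apply List.map_congr_left
  intro n _
  simp only [Function.comp_apply]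
  congr 1
  omega

lemma exists_match {A : Type*} (k : A → SymKind) {s : List A} (h : WellMatched k s) :
    ∀ u c v, s = u ++ c :: v → k c = SymKind.call →
      ∃ w r w', v = w ++ r :: w' ∧ k r = SymKind.ret ∧ WellMatched k w := by
  induction h with
  | nil => intro u c v ht _; exact absurd ht.symm (by simp)
  | int ha _ ih =>
    intro u c v ht hc
    cases u with
    | nil =>
      simp only [List.nil_append, List.cons.injEq] at ht
      obtain ⟨rfl, rfl⟩ := ht
      rw [ha] at hc; exact absurd hc (by simp)
    | cons x u' =>
      simp only [List.cons_append, List.cons.injEq] at ht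
      exact ih u' c v ht.2 hc
  | @matched c0 r0 s0 s0' hcall hret hs hs' ih1 ih2 =>
    intro u c v ht hc
    cases u with
    | nil =>
      simp only [List.nil_append, List.cons.injEq] at ht
      obtain ⟨rfl, rfl⟩ := ht
      exact ⟨_, _, _, rfl, hret, hs⟩
    | cons x u' =>
      simp only [List.cons_append, List.cons.injEq] at ht
      obtain ⟨rfl, ht⟩ := ht
      rcases List.append_eq_append_iff.mp ht with ⟨a', rfl, ha'⟩ | ⟨c', rfl, hc'⟩
      · cases a' with
        | nil =>
          simp only [List.nil_append, List.cons.injEq] at ha'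
          obtain ⟨rfl, rfl⟩ := ha'
          rw [hret] at hc; exact absurd hc (by simp)
        | cons y a'' =>
          simp only [List.cons_append, List.cons.injEq] at ha'
          obtain ⟨rfl, rfl⟩ := ha'
          exact ih2 a'' c v rfl hc
      · cases c' with
        | nil =>
          simp only [List.nil_append, List.cons.injEq] at hc'
          obtain ⟨rfl, rfl⟩ := hc'
          rw [hret] at hc; exact absurd hc (by simp)
        | cons y c''
        =>
          simp only [List.cons_append, List.cons.injEq] at hc'
          obtain ⟨rfl, rfl⟩ := hc'
          obtain ⟨w, r, w', hw, hr, hwm⟩ := ih1 u' c c'' rfl hc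
          exact ⟨w, r, w' ++ r0 :: s0', by rw [hw]; simp, hr, hwm⟩

lemma matchRet_not_lt {A : Type*} {k : A → SymKind} {σ : ℕ → A} {c r1 r2 : ℕ}
    (h1 : MatchRet k σ c r1) (h2 : MatchRet k σ c r2) (hlt : r1 < r2) : False := by
  obtain ⟨hc1, hr1, hw1⟩ := h1
  obtain ⟨hc2, hr2, hw2⟩ := h2
  have hd : wordSlice σ (c + 1) r2 =
      (wordSlice σ (c + 1) r1 ++ [σ r1]) ++ wordSlice σ (r1 + 1) r2 := by
    rw [wordSlice_append σ (a := c + 1) (m := r1 + 1) (b := r2) (by omega) (by omega),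
      wordSlice_append σ (a := c + 1) (m := r1) (b := r1 + 1) (by omega) (by omega),
      wordSlice_cons σ (m := r1) (b := r1 + 1) (by omega)]
    simp [wordSlice]
  have hp := prefix_le k hw2 _ _ hd
  have he := count_eq k hw1
  have : k (σ r1) ≠ SymKind.call := by rw [hr1]; simp
  simp [retCount, callCount, List.countP_append, List.countP_cons, hr1, this] at hp he
  omega

lemma matchRet_unique {A : Type*} {k : A → SymKind} {σ : ℕ → A} {c r1 r2 : ℕ}
    (h1 : MatchRet k σ c r1) (h2 : MatchRet k σ c r2) : r1 = r2 := by
  rcases lt_trichotomy r1 r2 with h | h | h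
  · exact absurd (matchRet_not_lt h1 h2 h) (by simp)
  · exact h
  · exact absurd (matchRet_not_lt h2 h1 h) (by simp)

lemma inner_match {A : Type*} {k : A → SymKind} {σ : ℕ → A} {a b m : ℕ}
    (hw : WellMatched k (wordSlice σ a b)) (h1 : a ≤ m) (h2 : m < b)
    (hc : k (σ m) = SymKind.call) : ∃ ρ, ρ < b ∧ MatchRet k σ m ρ := by
  have hd : wordSlice σ a b = wordSlice σ a m ++ σ m :: wordSlice σ (m + 1) b := by
    rw [wordSlice_append σ h1 (le_of_lt h2), wordSlice_cons σ h2]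
  obtain ⟨w, r, w', hv, hr, hwm⟩ := exists_match k hw _ _ _ hd hc
  set ρ := m + 1 + w.length with hρ
  have hlen : b - (m + 1) = w.length + 1 + w'.length := by
    have := congrArg List.length hv
    simp [wordSlice_length] at this
    omega
  have hρb : ρ < b := by omega
  have hd2 : wordSlice σ (m + 1) b = wordSlice σ (m + 1) ρ ++ σ ρ :: wordSlice σ (ρ + 1) b := by
    rw [wordSlice_append σ (m := ρ) (by omega) (by omega)]
    congr 1
    exact wordSlice_cons σ (by omega)
  rw [hv] at hd2
  have hlen2 : w.length = (wordSlice σ (m + 1) ρ).length := by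
    rw [wordSlice_length]; omega
  obtain ⟨hw1, hw2⟩ := List.append_inj hd2 hlen2
  have hσρ : σ ρ = r := (List.cons.injEq _ _ _ _ ▸ hw2).1.symm
  exact ⟨ρ, hρb, by omega, by rw [hσρ]; exact hr, by rw [← hw1]; exact hwm⟩

lemma descent {A : Type*} (k : A → SymKind) (σ : ℕ → A) (N : ℕ)
    (H : ∀ p, N ≤ p → ∃ c, Caller k σ p c ∧ ∃ r, MatchRet k σ c r) :
    ∀ c p, N ≤ p → Caller k σ p c → (∃ r, MatchRet k σ c r) → False := by
  intro c
  induction c using Nat.strong_induction_on with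
  | _ c IH =>
    intro p hNp hcall ⟨r, hmr⟩
    obtain ⟨⟨hcp, hkc, hsucc⟩, _⟩ := hcall
    have habs : AbsSucc k σ c r := by unfold AbsSucc; rw [if_pos hkc]; exact hmr
    have hpr : p < r := hsucc r habs
    have hNr : N ≤ r := by omega
    obtain ⟨c', hcall', r', hmr'⟩ := H r hNr
    obtain ⟨⟨hc'r, hkc', hsucc'⟩, hmax'⟩ := hcall'
    have habs' : AbsSucc k σ c' r' := by unfold AbsSucc; rw [if_pos hkc']; exact hmr'
    have hrr' : r < r' := hsucc' r' habs'
    -- show c' < c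
    have hc'c : c' < c := by
      rcases lt_trichotomy c' c with h | h | h
      · exact h
      · exfalso; subst h
        exact absurd (hsucc' r habs) (by omega)
      · exfalso
        -- c < c' < r, c' is a call inside the well-matched slice (c+1, r)
        obtain ⟨ρ, hρr, hmρ⟩ := inner_match hmr.2.2 (by omega : c + 1 ≤ c') hc'r hkc'
        have : AbsSucc k σ c' ρ := by unfold AbsSucc; rw [if_pos hkc']; exact hmρ
        have := hsucc' ρ this
        omega
    exact IH c' hc'c r hNr ⟨⟨hc'r, hkc', hsucc'⟩, hmax'⟩ ⟨r', hmr'⟩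

/-- in any infinite word over a pushdown alphabet, the set of
positions with no caller having a defined matching return (i.e. where `p_∞`
holds) is infinite. -/
theorem pInf_infinite {A : Type*} (k : A → SymKind) (σ : ℕ → A) :
    {p : ℕ | PInf k σ p}.Infinite := by
  by_contra hfin
  rw [Set.not_infinite] at hfin
  obtain ⟨N, hN⟩ := hfin.bddAbove
  have H : ∀ p, N + 1 ≤ p → ∃ c, Caller k σ p c ∧ ∃ r, MatchRet k σ c r := by
    intro p hp
    by_contra h
    have : p ∈ {p : ℕ | PInf k σ p} := h
    have := hN this
    omega
  obtain ⟨c, hcall, hr⟩ := H (N + 1) le_rfl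
  exact descent k σ (N + 1) H c (N + 1) le_rfl hcall hr
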